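/- Every homotopy class of a small loop at x lies in the closure of the trivial element in the quasitopological fundamental group: π₁^s(X,x) ⊆ closure({[e_x]}) in π₁^qtop(X,x). -/

import Mathlib

open FundamentalGroup

attribute [local instance] Path.Homotopic.setoid

noncomputable section

/-- A loop `β` based at `y` is a *small loop* if it is homotopic (rel endpoints) to a loop
contained in every open neighborhood of `y`. -/
def IsSmallLoop {X : TopCat} {y : X} (β : Path y y) : Prop :=
  ∀ U : Set X, IsOpen U → y ∈ U →
    ∃ β' : Path y y, (∀ t, β' t ∈ U) ∧ Path.Homotopic β β'

/-- The small loop group `π₁ˢ(X, x)`: the set of homotopy classes of small loops at `x`. -/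
def smallLoopSet {X : TopCat} (x : X) : Set (FundamentalGroup X x) :=
  {g | ∃ β : Path x x, IsSmallLoop β ∧ g = fromPath ⟦β⟧}

/-- The SG subgroup `π₁ˢᵍ(X, x)`: generated by conjugates of small loop classes along paths. -/
def sgSubgroup {X : TopCat} (x : X) : Subgroup (FundamentalGroup X x) :=
  Subgroup.closure {g | ∃ (y : X) (α : Path x y) (β : Path y y),
    IsSmallLoop β ∧ g = fromPath ⟦α.trans (β.trans α.symm)⟧}

/-- The quotient topology on the fundamental group, coinduced from the loop space
(with the compact-open topology). -/
def qtop {X : TopCat} (x : X) : TopologicalSpace (FundamentalGroup X x) :=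
  TopologicalSpace.coinduced (fun β : Path x x => fromPath ⟦β⟧) inferInstance

/-- If `W` is open in the compact-open topology and contains a constant map at `x`, then there
is an open neighborhood `O` of `x` such that every map with image in `O` lies in `W`. -/
lemma exists_open_of_const_mem {Y X : Type*} [TopologicalSpace Y] [TopologicalSpace X] {x : X}
    (f₀ : C(Y, X)) (hf₀ : ∀ t, f₀ t = x) {W : Set C(Y, X)} (hW : IsOpen W) (hmem : f₀ ∈ W) :
    ∃ O : Set X, IsOpen O ∧ x ∈ O ∧ ∀ f : C(Y, X), (∀ t, f t ∈ O) → f ∈ W := by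
  have hW' : TopologicalSpace.GenerateOpen
      (Set.image2 (fun K U => {f : C(Y, X) | Set.MapsTo f K U}) {K | IsCompact K} {U | IsOpen U})
      W := hW
  clear hW
  induction hW' with
  | basic u hu =>
    obtain ⟨K, hK, U, hU, rfl⟩ := hu
    rcases K.eq_empty_or_nonempty with hKe | ⟨t0, ht0⟩
    · exact ⟨Set.univ, isOpen_univ, trivial, fun f _ => by
        show Set.MapsTo f K U
        rw [hKe]
        exact Set.mapsTo_empty _ _⟩
    · refine ⟨U, hU, ?_, fun f hf t ht => hf t⟩
      have := hmem ht0
      rwa [hf₀ t0] at this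
  | univ => exact ⟨Set.univ, isOpen_univ, trivial, fun f _ => trivial⟩
  | inter W₁ W₂ _ _ ih₁ ih₂ =>
    obtain ⟨O₁, hO₁, hx₁, h₁⟩ := ih₁ hmem.1
    obtain ⟨O₂, hO₂, hx₂, h₂⟩ := ih₂ hmem.2
    exact ⟨O₁ ∩ O₂, hO₁.inter hO₂, ⟨hx₁, hx₂⟩,
      fun f hf => ⟨h₁ f fun t => (hf t).1, h₂ f fun t => (hf t).2⟩⟩
  | sUnion S _ ih =>
    obtain ⟨W', hW'S, hmem'⟩ := hmem
    obtain ⟨O, hO, hx, h⟩ := ih W' hW'S hmem'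
    exact ⟨O, hO, hx, fun f hf => ⟨W', hW'S, h f hf⟩⟩

/-- Every small loop class at `x` lies in the closure of the trivial element in
`π₁ᑫᵗᵒᵖ(X, x)`. -/
theorem smallLoopSet_subset_closure_one {X : TopCat} (x : X) :
    smallLoopSet x ⊆ @closure _ (qtop x) {(1 : FundamentalGroup X x)} := by
  letI : TopologicalSpace (FundamentalGroup X x) := qtop x
  rintro g ⟨β, hβ, rfl⟩
  rw [mem_closure_iff]
  intro V hV hgV
  -- the preimage of `V` in the loop space is open
  have hU : IsOpen ((fun γ : Path x x => fromPath ⟦γ⟧) ⁻¹' V) := hV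
  -- pull back along concatenation with `β`
  have hT : Continuous (fun η : Path x x => η.trans β) :=
    Continuous.path_trans continuous_id continuous_const
  have hU' : IsOpen ((fun η : Path x x => η.trans β) ⁻¹'
      ((fun γ : Path x x => fromPath ⟦γ⟧) ⁻¹' V)) := hU.preimage hT
  -- the constant loop belongs to this saturated open set
  have hc : Path.refl x ∈ (fun η : Path x x => η.trans β) ⁻¹'
      ((fun γ : Path x x => fromPath ⟦γ⟧) ⁻¹' V) := by
    have : (⟦(Path.refl x).trans β⟧ : Path.Homotopic.Quotient x x) = ⟦β⟧ :=
      Quotient.sound ⟨Path.Homotopy.reflTrans β⟩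
    simpa [Set.mem_preimage, this] using hgV
  -- the loop-space topology is induced from the compact-open topology
  obtain ⟨W, hWopen, hWeq⟩ := isOpen_induced_iff.mp hU'
  have hcW : ((Path.refl x : Path x x) : C(unitInterval, X)) ∈ W := by
    rw [← hWeq] at hc; exact hc
  obtain ⟨O, hO, hxO, hOW⟩ :=
    exists_open_of_const_mem ((Path.refl x : Path x x) : C(unitInterval, X)) (fun t => rfl) hWopen hcW
  -- use smallness of `β` to find a representative inside `O`
  obtain ⟨β', hβ'O, hββ'⟩ := hβ O hO hxO
  have hsymm : ∀ t, β'.symm t ∈ O := fun t => hβ'O _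
  have hmemW : ((β'.symm : Path x x) : C(unitInterval, X)) ∈ W := hOW _ hsymm
  have hmemU' : β'.symm ∈ (fun η : Path x x => η.trans β) ⁻¹'
      ((fun γ : Path x x => fromPath ⟦γ⟧) ⁻¹' V) := by
    rw [← hWeq]; exact hmemW
  have hVmem : fromPath ⟦β'.symm.trans β⟧ ∈ V := hmemU'
  -- this element is trivial
  have htriv : (⟦β'.symm.trans β⟧ : Path.Homotopic.Quotient x x) = ⟦Path.refl x⟧ := by
    refine Quotient.sound ?_
    have h1 : Path.Homotopic (β'.symm.trans β) (β'.symm.trans β') :=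
      Path.Homotopic.hcomp (Path.Homotopic.refl β'.symm) hββ'
    have h2 : Path.Homotopic (Path.refl x) (β'.symm.trans β') :=
      ⟨Path.Homotopy.reflSymmTrans β'⟩
    exact h1.trans h2.symm
  rw [htriv] at hVmem
  have hone : fromPath (⟦Path.refl x⟧ : Path.Homotopic.Quotient x x) =
      (1 : FundamentalGroup X x) := by
    rfl
  rw [hone] at hVmem
  exact ⟨1, hVmem, rfl⟩
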